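/- For every invertible real 2×2 matrix P there exist A ∈ GL₂(ℤ) and an invertible real 2×2 matrix P̃ with all entries non-negative such that P = A·P̃. -/

import Mathlib

-- Step 1: rational approximation gives an integer vector strictly inside the cone
private lemma step1 (p q r s : ℝ) (h : p * s - q * r ≠ 0) :
    ∃ n1 n2 : ℤ, 0 < n1 * p + n2 * r ∧ 0 < n1 * q + n2 * s := by
  set D := p * s - q * r with hD
  set x1 : ℝ := (s - r) / D with hx1d
  set x2 : ℝ := (p - q) / D with hx2d
  have hx1 : x1 * p + x2 * r = 1 := by
    rw [hx1d, hx2d]; field_simp; ring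
  have hx2 : x1 * q + x2 * s = 1 := by
    rw [hx1d, hx2d]; field_simp; ring
  set M : ℝ := 2 * (|p| + |q| + |r| + |s|) + 1 with hM
  have hMpos : 0 < M := by
    have := abs_nonneg p; have := abs_nonneg q; have := abs_nonneg r
    have := abs_nonneg s; simp only [hM]; linarith
  set δ : ℝ := 1 / M with hδ
  have hδpos : 0 < δ := by positivity
  obtain ⟨q1, hq1⟩ := exists_rat_near x1 hδpos
  obtain ⟨q2, hq2⟩ := exists_rat_near x2 hδpos
  -- bound the perturbation
  have key : ∀ u v : ℝ, |u| ≤ |p| + |q| + |r| + |s| → |v| ≤ |p| + |q| + |r| + |s| →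
      x1 * u + x2 * v = 1 → 0 < (q1 : ℝ) * u + (q2 : ℝ) * v := by
    intro u v hu hv hxy
    have e1 : |((q1 : ℝ) - x1) * u| ≤ δ * |u| := by
      rw [abs_mul]
      apply mul_le_mul_of_nonneg_right _ (abs_nonneg u)
      rw [abs_sub_comm]; exact hq1.le
    have e2 : |((q2 : ℝ) - x2) * v| ≤ δ * |v| := by
      rw [abs_mul]
      apply mul_le_mul_of_nonneg_right _ (abs_nonneg v)
      rw [abs_sub_comm]; exact hq2.le
    have f1 : -(δ * |u|) ≤ ((q1 : ℝ) - x1) * u := (abs_le.mp e1).1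
    have f2 : -(δ * |v|) ≤ ((q2 : ℝ) - x2) * v := (abs_le.mp e2).1
    have hlt : δ * |u| + δ * |v| < 1 := by
      have h1 : δ * |u| ≤ δ * (|p| + |q| + |r| + |s|) :=
        mul_le_mul_of_nonneg_left hu hδpos.le
      have h2 : δ * |v| ≤ δ * (|p| + |q| + |r| + |s|) :=
        mul_le_mul_of_nonneg_left hv hδpos.le
      have h3 : δ * M = 1 := by rw [hδ]; field_simp
      have h4 : δ * (2 * (|p| + |q| + |r| + |s|)) < δ * M := by
        apply mul_lt_mul_of_pos_left _ hδpos
        rw [hM]; linarith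
      have h5 : δ * (2 * (|p| + |q| + |r| + |s|))
          = δ * (|p| + |q| + |r| + |s|) + δ * (|p| + |q| + |r| + |s|) := by ring
      linarith
    have expand : (q1 : ℝ) * u + (q2 : ℝ) * v
        = 1 + ((q1 : ℝ) - x1) * u + ((q2 : ℝ) - x2) * v := by
      rw [← hxy]; ring
    -- |u|,|v| bounds give positivity
    nlinarith [abs_nonneg u, abs_nonneg v]
  have habs : ∀ t : ℝ, t = p ∨ t = q ∨ t = r ∨ t = s → |t| ≤ |p| + |q| + |r| + |s| := by
    intro t ht
    have := abs_nonneg p; have := abs_nonneg q; have := abs_nonneg r; have := abs_nonneg s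
    rcases ht with h | h | h | h <;> subst h <;> linarith
  have P1 : 0 < (q1 : ℝ) * p + (q2 : ℝ) * r :=
    key p r (habs p (by tauto)) (habs r (by tauto)) hx1
  have P2 : 0 < (q1 : ℝ) * q + (q2 : ℝ) * s :=
    key q s (habs q (by tauto)) (habs s (by tauto)) hx2
  -- clear denominators
  refine ⟨q1.num * q2.den, q2.num * q1.den, ?_, ?_⟩
  · have hcast1 : ((q1.num * q2.den : ℤ) : ℝ) = (q1.den * q2.den : ℝ) * (q1 : ℝ) := by
      push_cast
      rw [Rat.cast_def]
      field_simp
    have hcast2 : ((q2.num * q1.den : ℤ) : ℝ) = (q1.den * q2.den : ℝ) * (q2 : ℝ) := by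
      push_cast
      rw [Rat.cast_def]
      field_simp
    rw [hcast1, hcast2]
    have hN : (0 : ℝ) < (q1.den : ℝ) * (q2.den : ℝ) := by positivity
    calc (0:ℝ) < ((q1.den : ℝ) * q2.den) * ((q1:ℝ) * p + (q2:ℝ) * r) := mul_pos hN P1
      _ = (q1.den : ℝ) * q2.den * (q1:ℝ) * p + (q1.den : ℝ) * q2.den * (q2:ℝ) * r := by ring
    
  · have hcast1 : ((q1.num * q2.den : ℤ) : ℝ) = (q1.den * q2.den : ℝ) * (q1 : ℝ) := by
      push_cast
      rw [Rat.cast_def]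
      field_simp
    have hcast2 : ((q2.num * q1.den : ℤ) : ℝ) = (q1.den * q2.den : ℝ) * (q2 : ℝ) := by
      push_cast
      rw [Rat.cast_def]
      field_simp
    rw [hcast1, hcast2]
    have hN : (0 : ℝ) < (q1.den : ℝ) * (q2.den : ℝ) := by positivity
    calc (0:ℝ) < ((q1.den : ℝ) * q2.den) * ((q1:ℝ) * q + (q2:ℝ) * s) := mul_pos hN P2
      _ = (q1.den : ℝ) * q2.den * (q1:ℝ) * q + (q1.den : ℝ) * q2.den * (q2:ℝ) * s := by ring

private lemma step2 (p q r s : ℝ) (h : p * s - q * r ≠ 0) :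
    ∃ a b c d : ℤ, a * d - b * c = 1 ∧
      0 < (a : ℝ) * p + b * r ∧ 0 < (a : ℝ) * q + b * s ∧
      0 ≤ (c : ℝ) * p + d * r ∧ 0 ≤ (c : ℝ) * q + d * s := by
  obtain ⟨n1, n2, H1, H2⟩ := step1 p q r s h
  -- make primitive
  set g : ℕ := Int.gcd n1 n2 with hg
  have hgne : g ≠ 0 := by
    intro h0
    rw [hg, Int.gcd_eq_zero_iff] at h0
    rw [h0.1, h0.2] at H1
    norm_num at H1
  have hgpos : 0 < (g : ℝ) := by
    exact_mod_cast Nat.pos_of_ne_zero hgne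
  set a : ℤ := n1 / g with ha
  set b : ℤ := n2 / g with hb
  have han : (g : ℤ) * a = n1 := Int.mul_ediv_cancel' (Int.gcd_dvd_left n1 n2)
  have hbn : (g : ℤ) * b = n2 := Int.mul_ediv_cancel' (Int.gcd_dvd_right n1 n2)
  have hab : Int.gcd a b = 1 := by
    rw [ha, hb]
    exact Int.gcd_div_gcd_div_gcd (Nat.pos_of_ne_zero hgne)
  have W1 : 0 < (a : ℝ) * p + b * r := by
    have e : (n1 : ℝ) * p + n2 * r = (g : ℝ) * ((a : ℝ) * p + b * r) := by
      rw [← han, ← hbn]; push_cast; ring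
    rw [e] at H1
    nlinarith
  have W2 : 0 < (a : ℝ) * q + b * s := by
    have e : (n1 : ℝ) * q + n2 * s = (g : ℝ) * ((a : ℝ) * q + b * s) := by
      rw [← han, ← hbn]; push_cast; ring
    rw [e] at H2
    nlinarith
  -- Bezout
  have hbez : (1 : ℤ) = a * Int.gcdA a b + b * Int.gcdB a b := by
    rw [← Int.gcd_eq_gcd_ab]; exact_mod_cast hab.symm
  set c0 : ℤ := -Int.gcdB a b with hc0
  set d0 : ℤ := Int.gcdA a b with hd0
  have hdet0 : a * d0 - b * c0 = 1 := by rw [hc0, hd0]; linarith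
  -- shift second row into the cone
  obtain ⟨k, hk⟩ := exists_nat_ge
    (max ((-((c0 : ℝ) * p + d0 * r)) / ((a : ℝ) * p + b * r))
         ((-((c0 : ℝ) * q + d0 * s)) / ((a : ℝ) * q + b * s)))
  have hk1 : (-((c0 : ℝ) * p + d0 * r)) / ((a : ℝ) * p + b * r) ≤ k :=
    le_trans (le_max_left _ _) hk
  have hk2 : (-((c0 : ℝ) * q + d0 * s)) / ((a : ℝ) * q + b * s) ≤ k :=
    le_trans (le_max_right _ _) hk
  have hk1' : -((c0 : ℝ) * p + d0 * r) ≤ k * ((a : ℝ) * p + b * r) :=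
    (div_le_iff₀ W1).mp hk1
  have hk2' : -((c0 : ℝ) * q + d0 * s) ≤ k * ((a : ℝ) * q + b * s) :=
    (div_le_iff₀ W2).mp hk2
  refine ⟨a, b, c0 + k * a, d0 + k * b, by linarith [hdet0], W1, W2, ?_, ?_⟩
  · push_cast
    nlinarith
  · push_cast
    nlinarith

/-- every invertible real 2×2 matrix factors as `P = A * P̃` with
`A ∈ GL₂(ℤ)` and `P̃` invertible with non-negative entries. -/
theorem stmt3 (P : Matrix (Fin 2) (Fin 2) ℝ) (hP : IsUnit P.det) :
    ∃ A : Matrix (Fin 2) (Fin 2) ℤ, (A.det = 1 ∨ A.det = -1) ∧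
      ∃ Pt : Matrix (Fin 2) (Fin 2) ℝ, IsUnit Pt.det ∧ (∀ i j, 0 ≤ Pt i j) ∧
        P = (A.map (Int.cast : ℤ → ℝ)) * Pt := by
  have hdne : P.det ≠ 0 := hP.ne_zero
  have hdet2 : P.det = P 0 0 * P 1 1 - P 0 1 * P 1 0 := Matrix.det_fin_two P
  have h : P 0 0 * P 1 1 - P 0 1 * P 1 0 ≠ 0 := by rw [← hdet2]; exact hdne
  obtain ⟨a, b, c, d, hdet1, W1, W2, W3, W4⟩ := step2 (P 0 0) (P 0 1) (P 1 0) (P 1 1) h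
  set A : Matrix (Fin 2) (Fin 2) ℤ := !![d, -b; -c, a] with hA
  set B : Matrix (Fin 2) (Fin 2) ℤ := !![a, b; c, d] with hB
  have hAB : A * B = 1 := by
    ext i j
    fin_cases i <;> fin_cases j <;>
      simp [hA, hB, Matrix.mul_apply, Fin.sum_univ_two] <;> linarith [hdet1]
  refine ⟨A, ?_, (B.map (Int.cast : ℤ → ℝ)) * P, ?_, ?_, ?_⟩
  · left
    rw [hA, Matrix.det_fin_two_of]
    linarith [hdet1]
  · rw [Matrix.det_mul]
    have : (B.map (Int.cast : ℤ → ℝ)).det = 1 := by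
      rw [hB]
      rw [Matrix.det_fin_two]
      simp [Matrix.map_apply]

      exact_mod_cast hdet1
    rw [this, one_mul]
    exact hP
  · intro i j
    fin_cases i <;> fin_cases j <;>
      simp [hB, Matrix.mul_apply, Fin.sum_univ_two, Matrix.map_apply] <;>
      [linarith [W1]; linarith [W2]; linarith [W3]; linarith [W4]]
  · rw [← Matrix.mul_assoc]
    have : (A.map (Int.cast : ℤ → ℝ)) * (B.map (Int.cast : ℤ → ℝ))
        = (A * B).map (Int.cast : ℤ → ℝ) := by
      exact (Matrix.map_mul (f := Int.castRingHom ℝ)).symm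
    rw [this, hAB]
    rw [Matrix.map_one _ (by simp) (by simp), Matrix.one_mul]
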